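/- arXiv:2402.14736 — 2 statements merged into one kernel-verified Lean document; each statement's English description precedes it below -/
import Mathlib

section
/- Any unbiased ML-BLUE estimator Σ_{k=1}^K Σ_{ℓ=0}^L β̃^k_ℓ Q̂^k_ℓ can be rewritten exactly in the approximate control variate form Q̂ + Σ_{ℓ=1}^L α_ℓ (Q̂^e_ℓ − Q̂^μ_ℓ), where α_ℓ = Σ_k 1(β̃^k_ℓ ≥ 0) β̃^k_ℓ, Q̂ = Σ_k β̃^k_0 Q̂^k_0, Q̂^e_ℓ = Σ_k ω^{k,e}_ℓ Q̂^k_ℓ with ω^{k,e}_ℓ = 1(β̃^k_ℓ ≥ 0) β̃^k_ℓ / α_ℓ, and Q̂^μ_ℓ = Σ_k ω^{k,μ}_ℓ Q̂^k_ℓ with ω^{k,μ}_ℓ = −1(β̃^k_ℓ < 0) β̃^k_ℓ / α_ℓ. Moreover, each of Q̂, Q̂^e_ℓ, Q̂^μ_ℓ is an unbiased estimator of the corresponding model mean. -/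
open MeasureTheory Finset

/-- any unbiased ML-BLUE can be rewritten exactly in approximate
control variate form, with the indicated weights, and each component estimator
(the baseline Q̂, and the Q̂ᵉ_ℓ and Q̂^μ_ℓ) is unbiased for the corresponding
model mean. -/
theorem mlblue_is_acv {Ω : Type*} [MeasurableSpace Ω] (μ : Measure Ω)
    [IsProbabilityMeasure μ]
    (L K : ℕ) (Q : Fin (L + 1) → Ω → ℝ) (Qhat : Fin K → Fin (L + 1) → Ω → ℝ)
    (βt : Fin K → Fin (L + 1) → ℝ)
    (hQint : ∀ ℓ, Integrable (Q ℓ) μ)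
    (hint : ∀ k ℓ, Integrable (Qhat k ℓ) μ)
    (hunb : ∀ k ℓ, ∫ ω, Qhat k ℓ ω ∂μ = ∫ ω, Q ℓ ω ∂μ)
    (h0 : ∑ k, βt k 0 = 1)
    (hl : ∀ ℓ : Fin (L + 1), ℓ ≠ 0 → ∑ k, βt k ℓ = 0)
    (α : Fin (L + 1) → ℝ)
    (hα : ∀ ℓ, α ℓ = ∑ k, if 0 ≤ βt k ℓ then βt k ℓ else 0)
    (hαne : ∀ ℓ : Fin (L + 1), ℓ ≠ 0 → α ℓ ≠ 0) :
    (∀ ω, ∑ k, ∑ ℓ, βt k ℓ * Qhat k ℓ ω =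
      (∑ k, βt k 0 * Qhat k 0 ω) +
        ∑ ℓ ∈ univ.erase 0, α ℓ *
          ((∑ k, ((if 0 ≤ βt k ℓ then βt k ℓ else 0) / α ℓ) * Qhat k ℓ ω) -
           (∑ k, (-(if βt k ℓ < 0 then βt k ℓ else 0) / α ℓ) * Qhat k ℓ ω))) ∧
    (∫ ω, ∑ k, βt k 0 * Qhat k 0 ω ∂μ = ∫ ω, Q 0 ω ∂μ) ∧
    (∀ ℓ : Fin (L + 1), ℓ ≠ 0 →
      ∫ ω, ∑ k, ((if 0 ≤ βt k ℓ then βt k ℓ else 0) / α ℓ) * Qhat k ℓ ω ∂μ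
        = ∫ ω, Q ℓ ω ∂μ) ∧
    (∀ ℓ : Fin (L + 1), ℓ ≠ 0 →
      ∫ ω, ∑ k, (-(if βt k ℓ < 0 then βt k ℓ else 0) / α ℓ) * Qhat k ℓ ω ∂μ
        = ∫ ω, Q ℓ ω ∂μ) := by
  -- key integral lemma
  have key : ∀ (ℓ : Fin (L + 1)) (c : Fin K → ℝ),
      ∫ ω, ∑ k, c k * Qhat k ℓ ω ∂μ = (∑ k, c k) * ∫ ω, Q ℓ ω ∂μ := by
    intro ℓ c
    rw [integral_finset_sum _ (fun k _ => (hint k ℓ).const_mul (c k))]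
    rw [Finset.sum_mul]
    refine Finset.sum_congr rfl fun k _ => ?_
    rw [integral_const_mul, hunb]
  have negsum : ∀ ℓ : Fin (L + 1), ℓ ≠ 0 →
      (∑ k, (if βt k ℓ < 0 then βt k ℓ else 0)) = -α ℓ := by
    intro ℓ hℓ
    have h1 : (∑ k, (if 0 ≤ βt k ℓ then βt k ℓ else 0))
        + ∑ k, (if βt k ℓ < 0 then βt k ℓ else 0) = 0 := by
      rw [← Finset.sum_add_distrib]
      calc (∑ k, ((if 0 ≤ βt k ℓ then βt k ℓ else 0) + if βt k ℓ < 0 then βt k ℓ else 0))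
          = ∑ k, βt k ℓ := by
            refine Finset.sum_congr rfl fun k _ => ?_
            rcases le_or_gt 0 (βt k ℓ) with h | h
            · rw [if_pos h, if_neg (not_lt.2 h), add_zero]
            · rw [if_neg (not_le.2 h), if_pos h, zero_add]
        _ = 0 := hl ℓ hℓ

    rw [hα ℓ]; linarith
  refine ⟨?_, ?_, ?_, ?_⟩
  · intro ω
    rw [Finset.sum_comm]
    rw [← Finset.add_sum_erase _ _ (Finset.mem_univ (0 : Fin (L+1)))]
    congr 1
    refine Finset.sum_congr rfl fun ℓ hℓ => ?_
    have hne := hαne ℓ (Finset.ne_of_mem_erase hℓ)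
    rw [← Finset.sum_sub_distrib, Finset.mul_sum]
    refine Finset.sum_congr rfl fun k _ => ?_
    rcases le_or_gt 0 (βt k ℓ) with h | h
    · rw [if_pos h, if_neg (not_lt.2 h)]
      field_simp
      ring
    · rw [if_neg (not_le.2 h), if_pos h]
      field_simp
      ring
  · rw [key, h0, one_mul]
  · intro ℓ hℓ
    rw [key]
    rw [← Finset.sum_div, ← hα ℓ, div_self (hαne ℓ hℓ), one_mul]
  · intro ℓ hℓ
    rw [key]
    have : (∑ k, -(if βt k ℓ < 0 then βt k ℓ else 0) / α ℓ)
        = (-∑ k, (if βt k ℓ < 0 then βt k ℓ else 0)) / α ℓ := by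
      rw [← Finset.sum_div, Finset.sum_neg_distrib]
    rw [this, negsum ℓ hℓ, neg_neg, div_self (hαne ℓ hℓ), one_mul]
end

section
/- If the covariance matrix C of the grouped estimator is block diagonal with blocks C^1,...,C^K (i.e., estimators in distinct groups are uncorrelated), each C^k positive definite, and the matrix Σ_{k=1}^K (R^k)^T (C^k)^{-1} R^k is invertible, then the optimal group weights are β^k = (C^k)^{-1} R^k (Σ_{k′} (R^{k′})^T (C^{k′})^{-1} R^{k′})^{-1} e^0 and the minimal variance equals (e^0)^T (Σ_{k} (R^k)^T (C^k)^{-1} R^k)^{-1} e^0. -/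
open Matrix Finset

/-- optimal weights under independent groups.  With a block
diagonal covariance (blocks C^k, each positive definite) and invertible
M = ∑ₖ (Rᵏ)ᵀ (Cᵏ)⁻¹ Rᵏ, the optimal group weights are
βᵏ = (Cᵏ)⁻¹ Rᵏ M⁻¹ e⁰ and the minimal variance is (e⁰)ᵀ M⁻¹ e⁰. -/
theorem gacv_independent_groups_optimal {K L : ℕ} (n : Fin K → ℕ)
    (Ck : (k : Fin K) → Matrix (Fin (n k)) (Fin (n k)) ℝ)
    (hCk : ∀ k, (Ck k).PosDef)
    (Rk : (k : Fin K) → Matrix (Fin (n k)) (Fin (L + 1)) ℝ)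
    (M : Matrix (Fin (L + 1)) (Fin (L + 1)) ℝ)
    (hM : M = ∑ k, (Rk k)ᵀ * (Ck k)⁻¹ * Rk k)
    (hMinv : IsUnit M)
    (e0 : Fin (L + 1) → ℝ) (he0 : e0 = fun i => if i = 0 then 1 else 0)
    (βs : (k : Fin K) → Fin (n k) → ℝ)
    (hβs : ∀ k, βs k = ((Ck k)⁻¹ * Rk k * M⁻¹).mulVec e0) :
    -- β* is feasible,
    (∑ k, ((Rk k)ᵀ).mulVec (βs k)) = e0 ∧
    -- β* achieves the claimed minimal variance,
    (∑ k, βs k ⬝ᵥ (Ck k).mulVec (βs k)) = e0 ⬝ᵥ M⁻¹.mulVec e0 ∧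
    -- and β* is optimal among all feasible weights.
    (∀ β : (k : Fin K) → Fin (n k) → ℝ,
      (∑ k, ((Rk k)ᵀ).mulVec (β k)) = e0 →
        e0 ⬝ᵥ M⁻¹.mulVec e0 ≤ ∑ k, β k ⬝ᵥ (Ck k).mulVec (β k)) := by
  have hCdet : ∀ k, IsUnit (Ck k).det := fun k =>
    isUnit_iff_ne_zero.2 (ne_of_gt (hCk k).det_pos)
  have hMdet : IsUnit M.det := (Matrix.isUnit_iff_isUnit_det M).1 hMinv
  -- feasibility
  have hfeas : (∑ k, ((Rk k)ᵀ).mulVec (βs k)) = e0 := by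
    have h1 : (∑ k, (Rk k)ᵀ * ((Ck k)⁻¹ * Rk k * M⁻¹)) = 1 := by
      have : (∑ k, (Rk k)ᵀ * ((Ck k)⁻¹ * Rk k * M⁻¹))
          = (∑ k, (Rk k)ᵀ * (Ck k)⁻¹ * Rk k) * M⁻¹ := by
        rw [Finset.sum_mul]
        exact Finset.sum_congr rfl fun k _ => by
          simp only [Matrix.mul_assoc]
      rw [this, ← hM, Matrix.mul_nonsing_inv M hMdet]
    have hsmv : (∑ k, (Rk k)ᵀ * ((Ck k)⁻¹ * Rk k * M⁻¹)).mulVec e0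
        = ∑ k, ((Rk k)ᵀ * ((Ck k)⁻¹ * Rk k * M⁻¹)).mulVec e0 := by
      ext i
      simp only [Matrix.mulVec, dotProduct, Finset.sum_apply,
        Matrix.sum_apply, Finset.sum_mul]
      rw [Finset.sum_comm]
    calc (∑ k, ((Rk k)ᵀ).mulVec (βs k))
        = (∑ k, (Rk k)ᵀ * ((Ck k)⁻¹ * Rk k * M⁻¹)).mulVec e0 := by
          rw [hsmv]
          refine Finset.sum_congr rfl fun k _ => ?_
          rw [hβs k]
          simp only [Matrix.mulVec_mulVec, Matrix.mul_assoc]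
      _ = e0 := by rw [h1, Matrix.one_mulVec]
  -- C^k · β* simplifies
  have hCβs : ∀ k, (Ck k).mulVec (βs k) = (Rk k).mulVec (M⁻¹.mulVec e0) := by
    intro k
    rw [hβs k, Matrix.mulVec_mulVec]
    have : Ck k * ((Ck k)⁻¹ * Rk k * M⁻¹) = Rk k * M⁻¹ := by
      rw [← Matrix.mul_assoc, ← Matrix.mul_assoc,
        Matrix.mul_nonsing_inv _ (hCdet k), Matrix.one_mul]
    rw [this, ← Matrix.mulVec_mulVec]
  -- cross term
  have hcross : ∀ β : (k : Fin K) → Fin (n k) → ℝ,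
      (∑ k, ((Rk k)ᵀ).mulVec (β k)) = e0 →
      (∑ k, β k ⬝ᵥ (Ck k).mulVec (βs k)) = e0 ⬝ᵥ M⁻¹.mulVec e0 := by
    intro β hβ
    have : ∀ k, β k ⬝ᵥ (Ck k).mulVec (βs k)
        = ((Rk k)ᵀ).mulVec (β k) ⬝ᵥ M⁻¹.mulVec e0 := by
      intro k
      rw [hCβs k, Matrix.dotProduct_mulVec, ← Matrix.mulVec_transpose]
    have hsdp : (∑ k, ((Rk k)ᵀ).mulVec (β k)) ⬝ᵥ M⁻¹.mulVec e0
        = ∑ k, ((Rk k)ᵀ).mulVec (β k) ⬝ᵥ M⁻¹.mulVec e0 := by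
      simp only [dotProduct, Finset.sum_apply, Finset.sum_mul]
      rw [Finset.sum_comm]
    rw [Finset.sum_congr rfl fun k _ => this k, ← hsdp, hβ]
  have hvar : (∑ k, βs k ⬝ᵥ (Ck k).mulVec (βs k)) = e0 ⬝ᵥ M⁻¹.mulVec e0 :=
    hcross βs hfeas
  refine ⟨hfeas, hvar, ?_⟩
  intro β hβ
  -- symmetry of the quadratic form
  have hCsymm : ∀ k, (Ck k)ᵀ = Ck k := fun k => (hCk k).isHermitian
  have hsym : ∀ k (u v : Fin (n k) → ℝ),
      u ⬝ᵥ (Ck k).mulVec v = v ⬝ᵥ (Ck k).mulVec u := by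
    intro k u v
    rw [Matrix.dotProduct_mulVec, ← Matrix.mulVec_transpose, hCsymm k,
      dotProduct_comm]
  have hnonneg : 0 ≤ ∑ k, (β k - βs k) ⬝ᵥ (Ck k).mulVec (β k - βs k) := by
    apply Finset.sum_nonneg
    intro k _
    have := (hCk k).posSemidef.dotProduct_mulVec_nonneg (β k - βs k)
    simpa using this
  have hexpand : ∀ k, (β k - βs k) ⬝ᵥ (Ck k).mulVec (β k - βs k)
      = β k ⬝ᵥ (Ck k).mulVec (β k) - 2 * (β k ⬝ᵥ (Ck k).mulVec (βs k))
        + βs k ⬝ᵥ (Ck k).mulVec (βs k) := by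
    intro k
    rw [Matrix.mulVec_sub, sub_dotProduct, dotProduct_sub,
      dotProduct_sub, hsym k (βs k) (β k)]
    ring
  rw [Finset.sum_congr rfl fun k _ => hexpand k] at hnonneg
  rw [Finset.sum_add_distrib, Finset.sum_sub_distrib, ← Finset.mul_sum,
    hcross β hβ, hvar] at hnonneg
  linarith
end
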